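/- Let H be a real Hilbert space, B : H → H a symmetric elliptic linear map with ellipticity constant α₂ > 0, and suppose B = B₁ + B₂ for linear maps B₁, B₂ : H → H. Let χ₁, …, χ_n ∈ H span the finite-dimensional subspace D, let Q be the orthogonal projection onto D and Q^⊥ = id − Q, let M be the Gram matrix M i j = ⟨χ_i, χ_j⟩, and let m > 0 satisfy c ⬝ (M c) ≥ m·‖c‖² for all c ∈ ℝ^n. Set δ₁ = max_k ‖Q^⊥(B₁ χ_k)‖ and δ₂ = max_k ‖Q^⊥(B₂ χ_k)‖. If φ ∈ H and φ̂ ∈ D is a Galerkin solution relative to φ, then ‖φ − φ̂‖² ≤ (1 + (n/m)·(δ₁ + δ₂)²/α₂²)·‖Q^⊥ φ‖². -/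

import Mathlib

open RealInnerProductSpace

/-- Let `B = B₁ + B₂` be a symmetric elliptic linear map on a real Hilbert
space `H` with ellipticity constant `α₂ > 0`, let `χ₁, …, χ_n` span the
finite-dimensional subspace `D` with Gram matrix `M` satisfying `c ⬝ M c ≥ m ‖c‖²` for
`m > 0`, and set `δᵢ = max_k ‖Q^⊥(Bᵢ χ_k)‖`. If `φ̂ ∈ D` is a Galerkin solution relative
to `φ`, then `‖φ - φ̂‖² ≤ (1 + (n/m)(δ₁ + δ₂)²/α₂²) ‖Q^⊥ φ‖²`. -/
theorem galerkin_error_bound_span {H : Type*} [NormedAddCommGroup H]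
    [InnerProductSpace ℝ H] [CompleteSpace H]
    (B B₁ B₂ : H →ₗ[ℝ] H) (hB : B = B₁ + B₂)
    (hsym : ∀ x y : H, ⟪B x, y⟫ = ⟪x, B y⟫)
    (α₂ : ℝ) (hα₂ : 0 < α₂) (hell : ∀ x : H, α₂ * ‖x‖ ^ 2 ≤ ⟪x, B x⟫)
    {n : ℕ} (χ : Fin n → H)
    (D : Submodule ℝ H) (hD : D = Submodule.span ℝ (Set.range χ))
    [FiniteDimensional ℝ D]
    (M : Matrix (Fin n) (Fin n) ℝ) (hM : ∀ i j, M i j = ⟪χ i, χ j⟫)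
    (m : ℝ) (hm : 0 < m)
    (hMbound : ∀ c : Fin n → ℝ, m * ∑ i, c i ^ 2 ≤ ∑ i, c i * ∑ j, M i j * c j)
    (δ₁ δ₂ : ℝ)
    (hδ₁ : IsGreatest
      (Set.range fun k : Fin n =>
        ‖B₁ (χ k) - (D.orthogonalProjectionOnto (B₁ (χ k)) : H)‖) δ₁)
    (hδ₂ : IsGreatest
      (Set.range fun k : Fin n =>
        ‖B₂ (χ k) - (D.orthogonalProjectionOnto (B₂ (χ k)) : H)‖) δ₂)
    (φ φhat : H) (hmem : φhat ∈ D)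
    (hGal : ∀ ψ ∈ D, ⟪B (φ - φhat), ψ⟫ = 0) :
    ‖φ - φhat‖ ^ 2 ≤ (1 + (n / m) * (δ₁ + δ₂) ^ 2 / α₂ ^ 2) *
      ‖φ - (D.orthogonalProjectionOnto φ : H)‖ ^ 2 := by
  -- nonnegativity of δ
  obtain ⟨⟨k₁, hk₁⟩, hub₁⟩ := hδ₁
  obtain ⟨⟨k₂, hk₂⟩, hub₂⟩ := hδ₂
  have hδ₁nn : 0 ≤ δ₁ := hk₁ ▸ norm_nonneg _
  have hδ₂nn : 0 ≤ δ₂ := hk₂ ▸ norm_nonneg _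
  have hδnn : 0 ≤ δ₁ + δ₂ := by linarith
  -- notation
  set p : H := (D.orthogonalProjectionOnto φ : H) with hp
  set d : H := p - φhat with hd
  set w : H := φ - p with hw
  -- the "Q perp" linear map
  set f : H →ₗ[ℝ] H :=
    LinearMap.id - D.subtype.comp ((D.orthogonalProjectionOnto).toLinearMap) with hfdef
  have hfapp : ∀ x : H, f x = x - (D.orthogonalProjectionOnto x : H) := fun x => rfl
  have hdD : d ∈ D := sub_mem (Submodule.coe_mem _) hmem
  have hwperp : w ∈ Dᗮ := D.sub_starProjection_mem_orthogonal φ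
  have hwd : ⟪w, d⟫ = 0 := by
    rw [real_inner_comm]
    exact (Submodule.mem_orthogonal D w).mp hwperp d hdD
  have hsplit : φ - φhat = w + d := by
    simp only [hw, hd]; abel
  have hpyth : ‖φ - φhat‖ ^ 2 = ‖w‖ ^ 2 + ‖d‖ ^ 2 := by
    rw [hsplit, norm_add_sq_real, hwd]; ring
  -- coefficients
  obtain ⟨c, hc⟩ := (Submodule.mem_span_range_iff_exists_fun ℝ).mp (hD ▸ hdD)
  -- Gram identity
  have hgram : ‖d‖ ^ 2 = ∑ i, c i * ∑ j, M i j * c j := by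
    rw [← real_inner_self_eq_norm_sq, ← hc, sum_inner]
    refine Finset.sum_congr rfl fun i _ => ?_
    rw [real_inner_smul_left, inner_sum]
    congr 1
    refine Finset.sum_congr rfl fun j _ => ?_
    rw [real_inner_smul_right, hM, mul_comm]
  have hms : m * ∑ i, c i ^ 2 ≤ ‖d‖ ^ 2 := hgram ▸ hMbound c
  -- Galerkin : ⟪B d, d⟫ = -⟪B w, d⟫
  have hG : ⟪B d, d⟫ = -⟪B w, d⟫ := by
    have h0 := hGal d hdD
    rw [hsplit, map_add, inner_add_left] at h0
    linarith
  -- ellipticity chain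
  have hBw : ⟪B w, d⟫ = ⟪w, f (B d)⟫ := by
    rw [hsym, hfapp, inner_sub_right]
    have : ⟪w, (D.orthogonalProjectionOnto (B d) : H)⟫ = 0 := by
      rw [real_inner_comm]
      exact (Submodule.mem_orthogonal D w).mp hwperp _ (Submodule.coe_mem _)
    rw [this]; ring
  have hell' : α₂ * ‖d‖ ^ 2 ≤ ‖w‖ * ‖f (B d)‖ := by
    calc α₂ * ‖d‖ ^ 2 ≤ ⟪d, B d⟫ := hell d
      _ = -⟪w, f (B d)⟫ := by rw [real_inner_comm, hG, hBw]
      _ ≤ |⟪w, f (B d)⟫| := neg_le_abs _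
      _ ≤ ‖w‖ * ‖f (B d)‖ := abs_real_inner_le_norm _ _
  -- bound ‖f (B d)‖
  have hfBd : f (B d) = ∑ i, c i • (f (B₁ (χ i)) + f (B₂ (χ i))) := by
    rw [← hc, map_sum, map_sum]
    refine Finset.sum_congr rfl fun i _ => ?_
    rw [map_smul, map_smul, hB]
    congr 1
    rw [LinearMap.add_apply, map_add]
  have hfbound : ‖f (B d)‖ ≤ (δ₁ + δ₂) * ∑ i, |c i| := by
    rw [hfBd]
    calc ‖∑ i, c i • (f (B₁ (χ i)) + f (B₂ (χ i)))‖
        ≤ ∑ i, ‖c i • (f (B₁ (χ i)) + f (B₂ (χ i)))‖ := norm_sum_le _ _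
      _ ≤ ∑ i, |c i| * (δ₁ + δ₂) := by
          refine Finset.sum_le_sum fun i _ => ?_
          rw [norm_smul, Real.norm_eq_abs]
          refine mul_le_mul_of_nonneg_left ?_ (abs_nonneg _)
          calc ‖f (B₁ (χ i)) + f (B₂ (χ i))‖
              ≤ ‖f (B₁ (χ i))‖ + ‖f (B₂ (χ i))‖ := norm_add_le _ _
            _ ≤ δ₁ + δ₂ := add_le_add
                (hub₁ ⟨i, by rw [hfapp]⟩) (hub₂ ⟨i, by rw [hfapp]⟩)
      _ = (δ₁ + δ₂) * ∑ i, |c i| := by rw [← Finset.sum_mul, mul_comm]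
  -- Cauchy-Schwarz on ℝⁿ
  have hCS : (∑ i, |c i|) ^ 2 ≤ (n : ℝ) * ∑ i, c i ^ 2 := by
    have := Finset.sum_mul_sq_le_sq_mul_sq Finset.univ (fun _ : Fin n => (1 : ℝ))
      (fun i => |c i|)
    simpa [sq_abs, Finset.card_univ] using this
  -- put it together
  set a := ‖d‖ with ha
  set t := ‖w‖ with ht
  have hann : 0 ≤ a := norm_nonneg _
  have htnn : 0 ≤ t := norm_nonneg _
  have hSnn : 0 ≤ ∑ i, |c i| := Finset.sum_nonneg fun i _ => abs_nonneg _
  have key : m * α₂ ^ 2 * a ^ 2 ≤ (n : ℝ) * (δ₁ + δ₂) ^ 2 * t ^ 2 := by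
    rcases eq_or_lt_of_le hann with h0 | h0
    · have : a ^ 2 = 0 := by rw [← h0]; ring
      rw [this, mul_zero]
      positivity
    · have h1 : α₂ * a ^ 2 ≤ t * ((δ₁ + δ₂) * ∑ i, |c i|) := by
        calc α₂ * a ^ 2 ≤ t * ‖f (B d)‖ := hell'
          _ ≤ t * ((δ₁ + δ₂) * ∑ i, |c i|) :=
            mul_le_mul_of_nonneg_left hfbound htnn
      have h2 : (α₂ * a ^ 2) ^ 2 ≤ (t * ((δ₁ + δ₂) * ∑ i, |c i|)) ^ 2 := by
        have h1nn : 0 ≤ α₂ * a ^ 2 := by positivity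
        exact pow_le_pow_left₀ h1nn h1 2
      have h3 : ((δ₁ + δ₂) * ∑ i, |c i|) ^ 2 ≤ (δ₁ + δ₂) ^ 2 * ((n : ℝ) * ∑ i, c i ^ 2) := by
        rw [mul_pow]
        exact mul_le_mul_of_nonneg_left hCS (by positivity)
      have hA : α₂ ^ 2 * a ^ 4 ≤
          t ^ 2 * ((δ₁ + δ₂) ^ 2 * ((n : ℝ) * ∑ i, c i ^ 2)) := by
        calc α₂ ^ 2 * a ^ 4 = (α₂ * a ^ 2) ^ 2 := by ring
          _ ≤ (t * ((δ₁ + δ₂) * ∑ i, |c i|)) ^ 2 := h2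
          _ = t ^ 2 * ((δ₁ + δ₂) * ∑ i, |c i|) ^ 2 := by ring
          _ ≤ t ^ 2 * ((δ₁ + δ₂) ^ 2 * ((n : ℝ) * ∑ i, c i ^ 2)) :=
            mul_le_mul_of_nonneg_left h3 (sq_nonneg t)
      have h4 : m * α₂ ^ 2 * a ^ 2 * a ^ 2 ≤
          (n : ℝ) * (δ₁ + δ₂) ^ 2 * t ^ 2 * a ^ 2 := by
        calc m * α₂ ^ 2 * a ^ 2 * a ^ 2 = m * (α₂ ^ 2 * a ^ 4) := by ring
          _ ≤ m * (t ^ 2 * ((δ₁ + δ₂) ^ 2 * ((n : ℝ) * ∑ i, c i ^ 2))) :=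
            mul_le_mul_of_nonneg_left hA hm.le
          _ = ((n : ℝ) * (δ₁ + δ₂) ^ 2 * t ^ 2) * (m * ∑ i, c i ^ 2) := by ring
          _ ≤ ((n : ℝ) * (δ₁ + δ₂) ^ 2 * t ^ 2) * a ^ 2 :=
            mul_le_mul_of_nonneg_left hms (by positivity)
          _ = (n : ℝ) * (δ₁ + δ₂) ^ 2 * t ^ 2 * a ^ 2 := by ring
      have ha2 : 0 < a ^ 2 := by positivity
      exact le_of_mul_le_mul_right h4 ha2
  have hfinal : a ^ 2 ≤ (n / m) * (δ₁ + δ₂) ^ 2 / α₂ ^ 2 * t ^ 2 := by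
    have heq : (n : ℝ) / m * (δ₁ + δ₂) ^ 2 / α₂ ^ 2 * t ^ 2 =
        (n : ℝ) * (δ₁ + δ₂) ^ 2 * t ^ 2 / (m * α₂ ^ 2) := by
      field_simp
    rw [heq, le_div_iff₀ (by positivity)]
    calc a ^ 2 * (m * α₂ ^ 2) = m * α₂ ^ 2 * a ^ 2 := by ring
      _ ≤ (n : ℝ) * (δ₁ + δ₂) ^ 2 * t ^ 2 := key
  calc ‖φ - φhat‖ ^ 2 = t ^ 2 + a ^ 2 := hpyth
    _ ≤ t ^ 2 + (n / m) * (δ₁ + δ₂) ^ 2 / α₂ ^ 2 * t ^ 2 := by linarith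
    _ = (1 + (n / m) * (δ₁ + δ₂) ^ 2 / α₂ ^ 2) * t ^ 2 := by ring
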